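/- Let K, L ⊂ ℝ be non-empty bounded sets. Then G_1((K + L)/2 + [0,1]) ≥ (G_1(K) + G_1(L))/2. -/
import Mathlib

open Set
open scoped Pointwise

/-- The lattice point enumerator on `ℝ`. -/
noncomputable def latticeEnum1 (M : Set ℝ) : ℕ := (M ∩ {x : ℝ | ∃ z : ℤ, x = z}).ncard

/-- Integers in a bounded real set form a finite set. -/
lemma intFinite {M : Set ℝ} (hM : Bornology.IsBounded M) :
    {n : ℤ | (n : ℝ) ∈ M}.Finite := by
  obtain ⟨C, hC⟩ := isBounded_iff_forall_norm_le.mp hM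
  apply (Set.finite_Icc (⌈-C⌉ : ℤ) ⌊C⌋).subset
  intro n hn
  have := hC _ hn
  rw [Real.norm_eq_abs, abs_le] at this
  have h1 : -C ≤ (n:ℝ) := this.1
  exact ⟨Int.ceil_le.2 h1, Int.le_floor.2 this.2⟩

lemma latticeEnum1_eq (M : Set ℝ) :
    latticeEnum1 M = {n : ℤ | (n : ℝ) ∈ M}.ncard := by
  have h : M ∩ {x : ℝ | ∃ z : ℤ, x = z} = (fun n : ℤ => (n : ℝ)) '' {n : ℤ | (n : ℝ) ∈ M} := by
    ext x
    constructor
    · rintro ⟨hx, z, rfl⟩; exact ⟨z, hx, rfl⟩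
    · rintro ⟨n, hn, rfl⟩; exact ⟨hn, n, rfl⟩
  rw [latticeEnum1, h, Set.ncard_image_of_injective _ Int.cast_injective]

lemma pair_card_le {a b : ℤ} : ({a, b} : Finset ℤ).card ≤ 2 := by
  apply (Finset.card_insert_le _ _).trans
  simp

/-- one-sided core: fibers of `⌈(x+b)/2⌉` have size at most 2. -/
lemma core2 (Bf Sf : Finset ℤ) (x : ℝ)
    (hmem : ∀ b ∈ Bf, ∀ z : ℤ, x + b ≤ 2 * z → 2 * z ≤ x + b + 2 → z ∈ Sf) :
    Bf.card ≤ 2 * Sf.card := by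
  classical
  refine Finset.card_le_mul_card_image_of_maps_to (s := Bf) (t := Sf)
    (f := fun b : ℤ => ⌈(x + (b:ℝ)) / 2⌉) ?_ 2 ?_
  · intro b hb
    apply hmem b hb
    · have := Int.le_ceil ((x + b) / 2); push_cast; linarith
    · have := Int.ceil_lt_add_one ((x + b) / 2); push_cast; linarith
  · intro z _
    refine le_trans (Finset.card_le_card (t := {⌊2 * (z : ℝ) - x⌋ - 1, ⌊2 * (z : ℝ) - x⌋}) ?_)
      pair_card_le
    intro b hb
    simp only [Finset.mem_filter] at hb
    have hc : (z:ℝ) - 1 < (x + b) / 2 ∧ (x + b) / 2 ≤ z := by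
      have hz : ⌈(x + (b:ℝ)) / 2⌉ = z := hb.2
      constructor
      · have h2 : (z - 1 : ℤ) < ⌈(x + (b:ℝ)) / 2⌉ := by omega
        have := Int.lt_ceil.mp h2
        push_cast at this; linarith
      · have := Int.ceil_le.mp (le_of_eq hz)
        linarith
    have hble : (b:ℝ) ≤ 2 * z - x := by linarith [hc.2]
    have hbgt : (b:ℝ) > 2 * z - x - 2 := by linarith [hc.1]
    have h1 : b ≤ ⌊2 * (z:ℝ) - x⌋ := Int.le_floor.2 hble
    have h2 : ⌊2 * (z:ℝ) - x⌋ - 2 < b := by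
      have hf : (⌊2 * (z:ℝ) - x⌋ : ℝ) ≤ 2 * z - x := Int.floor_le _
      have : (⌊2 * (z:ℝ) - x⌋ : ℝ) - 2 < b := by linarith
      exact_mod_cast this
    simp only [Finset.mem_insert, Finset.mem_singleton]
    omega

/-- two-sided core via the staircase chain. -/
lemma core (Af Bf Sf : Finset ℤ) (hA : Af.Nonempty) (hB : Bf.Nonempty)
    (hmem : ∀ a ∈ Af, ∀ b ∈ Bf, ∀ z : ℤ, a + b ≤ 2 * z → 2 * z ≤ a + b + 2 → z ∈ Sf) :
    Af.card + Bf.card ≤ 2 * Sf.card := by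
  classical
  set α := Af.min' hA with hα
  set β := Bf.max' hB with hβ
  set E₁ : Finset ℤ := (Bf ∪ Bf.image (· + 1)).image (α + ·) with hE₁
  set E₂ : Finset ℤ := Af.image (· + β + 1) with hE₂
  set E : Finset ℤ := E₁ ∪ E₂ with hE
  -- every d ∈ E is of the form a + b + k with a ∈ Af, b ∈ Bf, k ∈ {0,1}
  have hEform : ∀ d ∈ E, ∃ a ∈ Af, ∃ b ∈ Bf, d = a + b ∨ d = a + b + 1 := by
    intro d hd
    rw [hE, Finset.mem_union] at hd
    rcases hd with hd | hd
    · rw [hE₁, Finset.mem_image] at hd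
      obtain ⟨b', hb', rfl⟩ := hd
      rw [Finset.mem_union] at hb'
      rcases hb' with hb' | hb'
      · exact ⟨α, Af.min'_mem hA, b', hb', Or.inl rfl⟩
      · rw [Finset.mem_image] at hb'
        obtain ⟨b, hb, rfl⟩ := hb'
        exact ⟨α, Af.min'_mem hA, b, hb, Or.inr (by omega)⟩
    · rw [hE₂, Finset.mem_image] at hd
      obtain ⟨a, ha, rfl⟩ := hd
      exact ⟨a, ha, β, Bf.max'_mem hB, Or.inr rfl⟩
  -- cardinality of E
  have hE₁card : Bf.card + 1 ≤ E₁.card := by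
    rw [hE₁, Finset.card_image_of_injective _ (add_right_injective α)]
    have hsub : insert (β + 1) Bf ⊆ Bf ∪ Bf.image (· + 1) := by
      intro x hx
      rw [Finset.mem_insert] at hx
      rcases hx with rfl | hx
      · exact Finset.mem_union_right _ (Finset.mem_image_of_mem _ (Bf.max'_mem hB))
      · exact Finset.mem_union_left _ hx
    have hnot : β + 1 ∉ Bf := fun h => by
      have := Bf.le_max' _ h; omega
    calc Bf.card + 1 = (insert (β + 1) Bf).card := (Finset.card_insert_of_notMem hnot).symm
      _ ≤ _ := Finset.card_le_card hsub
  have hinter : E₁ ∩ E₂ ⊆ {α + β + 1} := by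
    intro x hx
    rw [Finset.mem_inter] at hx
    obtain ⟨h1, h2⟩ := hx
    rw [hE₁, Finset.mem_image] at h1
    obtain ⟨b', hb', rfl⟩ := h1
    rw [hE₂, Finset.mem_image] at h2
    obtain ⟨a, ha, hae⟩ := h2
    have hble : b' ≤ β + 1 := by
      rw [Finset.mem_union] at hb'
      rcases hb' with hb' | hb'
      · have := Bf.le_max' _ hb'; omega
      · rw [Finset.mem_image] at hb'
        obtain ⟨b, hb, rfl⟩ := hb'
        have := Bf.le_max' _ hb; omega
    have hage : α ≤ a := Af.min'_le _ ha
    have : α + b' = α + β + 1 := by omega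
    simp [this]
  have hEcard : Af.card + Bf.card ≤ E.card := by
    have h := Finset.card_union_add_card_inter E₁ E₂
    have h2 : (E₁ ∩ E₂).card ≤ 1 := le_trans (Finset.card_le_card hinter) (by simp)
    have h3 : E₂.card = Af.card := Finset.card_image_of_injective _ (fun x y h => by omega)
    rw [hE]
    omega
  -- map E into Sf with fibers of size ≤ 2
  refine le_trans hEcard ?_
  apply Finset.card_le_mul_card_image_of_maps_to (f := fun d => (d + 1) / 2) (t := Sf)
  · intro d hd
    obtain ⟨a, ha, b, hb, hcase⟩ := hEform d hd
    apply hmem a ha b hb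
    · rcases hcase with rfl | rfl <;> omega
    · rcases hcase with rfl | rfl <;> omega
  · intro z _
    refine le_trans (Finset.card_le_card (t := {2 * z - 1, 2 * z}) ?_) pair_card_le
    intro d hd
    simp only [Finset.mem_filter] at hd
    have := hd.2
    simp only [Finset.mem_insert, Finset.mem_singleton]
    omega

theorem stmt16 (K L : Set ℝ) (hK : K.Nonempty) (hL : L.Nonempty)
    (hKb : Bornology.IsBounded K) (hLb : Bornology.IsBounded L) :
    (latticeEnum1 ((2 : ℝ)⁻¹ • (K + L) + Set.Icc (0 : ℝ) 1) : ℝ) ≥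
      ((latticeEnum1 K : ℝ) + (latticeEnum1 L : ℝ)) / 2 := by
  classical
  set T : Set ℝ := (2 : ℝ)⁻¹ • (K + L) + Set.Icc (0 : ℝ) 1 with hT
  have hTb : Bornology.IsBounded T := by
    exact ((hKb.add hLb).smul₀ _).add (Metric.isBounded_Icc 0 1)
  -- membership lemma
  have memT : ∀ x ∈ K, ∀ y ∈ L, ∀ c : ℝ, (x + y) / 2 ≤ c → c ≤ (x + y) / 2 + 1 → c ∈ T := by
    intro x hx y hy c h1 h2
    refine ⟨(2:ℝ)⁻¹ * (x + y), ⟨x + y, ⟨x, hx, y, hy, rfl⟩, rfl⟩,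
      c - (x + y) / 2, ⟨by linarith, by linarith⟩, by ring⟩
  have hAf := intFinite hKb
  have hBf := intFinite hLb
  have hSf := intFinite hTb
  set Af := hAf.toFinset with hAfd
  set Bf := hBf.toFinset with hBfd
  set Sf := hSf.toFinset with hSfd
  have hKe : latticeEnum1 K = Af.card := by
    rw [latticeEnum1_eq, Set.ncard_eq_toFinset_card _ hAf]
  have hLe : latticeEnum1 L = Bf.card := by
    rw [latticeEnum1_eq, Set.ncard_eq_toFinset_card _ hBf]
  have hTe : latticeEnum1 T = Sf.card := by
    rw [latticeEnum1_eq, Set.ncard_eq_toFinset_card _ hSf]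
  have key : Af.card + Bf.card ≤ 2 * Sf.card := by
    have hmemS : ∀ z : ℤ, (z : ℝ) ∈ T → z ∈ Sf := by
      intro z hz
      rw [hSfd, Set.Finite.mem_toFinset]; exact hz
    by_cases hA : Af.Nonempty
    · by_cases hB : Bf.Nonempty
      · apply core Af Bf Sf hA hB
        intro a ha b hb z h1 h2
        rw [hAfd, Set.Finite.mem_toFinset] at ha
        rw [hBfd, Set.Finite.mem_toFinset] at hb
        apply hmemS
        apply memT _ ha _ hb
        · have : (a:ℝ) + b ≤ 2 * z := by exact_mod_cast h1
          linarith
        · have : (2:ℝ) * z ≤ a + b + 2 := by exact_mod_cast h2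
          linarith
      · rw [Finset.not_nonempty_iff_eq_empty] at hB
        rw [hB]
        obtain ⟨y, hy⟩ := hL
        have := core2 Af Sf y (fun b hb z h1 h2 => by
          rw [hAfd, Set.Finite.mem_toFinset] at hb
          apply hmemS
          apply memT _ hb _ hy
          · have hz : (b:ℝ) + y ≤ 2 * z := by push_cast at h1 ⊢; linarith
            linarith
          · have hz : (2:ℝ) * z ≤ b + y + 2 := by push_cast at h2 ⊢; linarith
            linarith)
        simpa using this
    · rw [Finset.not_nonempty_iff_eq_empty] at hA
      rw [hA]
      obtain ⟨x, hx⟩ := hK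
      have := core2 Bf Sf x (fun b hb z h1 h2 => by
        rw [hBfd, Set.Finite.mem_toFinset] at hb
        apply hmemS
        apply memT _ hx _ hb
        · have hz : (x:ℝ) + b ≤ 2 * z := by push_cast at h1 ⊢; linarith
          linarith
        · have hz : (2:ℝ) * z ≤ x + b + 2 := by push_cast at h2 ⊢; linarith
          linarith)
      simpa using this
  rw [ge_iff_le, div_le_iff₀ (by norm_num : (0:ℝ) < 2)]
  rw [hKe, hLe, hTe]
  have key' : (Af.card : ℝ) + Bf.card ≤ 2 * Sf.card := by exact_mod_cast key
  push_cast
  linarith
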